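/- For any odd n ≥ 7, every product of 10 prefix-reversals drawn from {r_{n-3}, r_{n-1}, r_n}, with consecutive factors distinct (cyclically), is different from the identity permutation; i.e., the cubic Pancake graph Cay(Sym_n, {r_{n-3}, r_{n-1}, r_n}) contains no cycle of length 10. -/

import Mathlib

/-- The prefix-reversal `r_m` on `{1, ..., n}` (encoded as `Fin n`, 0-indexed):
the 1-indexed entry `j` with `j ≤ m` is sent to `m + 1 - j`, and entries `j > m`
are fixed.  If `m > n` it is the identity. -/
def pancakeRev (n m : ℕ) : Equiv.Perm (Fin n) :=
  Function.Involutive.toPerm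
    (fun a => if h : a.val < m ∧ m ≤ n then ⟨m - 1 - a.val, by omega⟩ else a)
    (by
      intro a
      beta_reduce
      by_cases h : a.val < m ∧ m ≤ n
      · rw [dif_pos h]
        have h2 : m - 1 - a.val < m ∧ m ≤ n := by omega
        rw [dif_pos h2]
        apply Fin.ext
        simp
        omega
      · rw [dif_neg h, dif_neg h])

def stepA (k : ℕ) (s : Bool × ℕ) : Bool × ℕ :=
  match s with
  | (false, c) => (true, c + k + 1)
  | (true, c) => if k < c then (false, c - 1 - k) else (true, c)
def runA (l : List ℕ) (s : Bool × ℕ) : Bool × ℕ := l.foldr stepA s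
def okA : List ℕ → Bool × ℕ → Bool
  | [], s => decide (s.2 ≤ 16)
  | k :: l, s => okA l s && decide ((runA (k :: l) s).2 ≤ 16)
def wapp (l : List ℕ) (a : ℕ) : ℕ := l.foldr (fun m b => if b < m then m - 1 - b else b) a
def itp (n : ℕ) (s : Bool × ℕ) : ℕ := if s.1 then n - s.2 else s.2
def SL : List (Bool × ℕ) := [(false, 0), (true, 1), (true, 2), (true, 3)]
def goodBig (l : List ℕ) : Bool := SL.any fun s => okA l s && !decide (runA l s = s)
def goodSmall (n : ℕ) (l : List ℕ) : Bool :=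
  (List.range n).any fun a => !decide (wapp (l.map (n - ·)) a = a)

lemma pancakeRev_val (n m : ℕ) (hm : m ≤ n) (y : Fin n) :
    ((pancakeRev n m) y).val = if (y : ℕ) < m then m - 1 - (y : ℕ) else (y : ℕ) := by
  show ((if h : (y : ℕ) < m ∧ m ≤ n then (⟨m - 1 - y.val, by omega⟩ : Fin n) else y)).val = _
  split_ifs with h1 h2 h2 <;> simp_all <;> omega

lemma prod_apply_val (n : ℕ) (l : List ℕ) (hl : ∀ m ∈ l, m ≤ n) (x : Fin n) :
    (((l.map (pancakeRev n)).prod) x).val = wapp l x.val := by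
  induction l with
  | nil => simp [wapp]
  | cons m l ih =>
    have hm : m ≤ n := hl m (by simp)
    have ih' := ih (fun m' hm' => hl m' (by simp [hm']))
    have e : wapp (m :: l) x.val =
        if wapp l x.val < m then m - 1 - wapp l x.val else wapp l x.val := rfl
    simp only [List.map_cons, List.prod_cons, Equiv.Perm.mul_apply, e, ← ih']
    exact pancakeRev_val n m hm _

lemma key (n : ℕ) (l : List ℕ) (hl : ∀ m ∈ l, m ≤ n) (a : ℕ) (ha : a < n)
    (hmove : wapp l a ≠ a) : (l.map (pancakeRev n)).prod ≠ 1 := by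
  intro h
  have h2 := prod_apply_val n l hl ⟨a, ha⟩
  rw [h] at h2
  simp at h2
  exact hmove h2.symm

lemma okA_last : ∀ (l : List ℕ) (s : Bool × ℕ), okA l s = true → (runA l s).2 ≤ 16 := by
  intro l s h
  cases l with
  | nil => simpa [okA, runA] using h
  | cons k l =>
    have : (okA l s && decide ((runA (k :: l) s).2 ≤ 16)) = true := h
    simp only [Bool.and_eq_true, decide_eq_true_eq] at this
    exact this.2

lemma step_spec (n k : ℕ) (hn : 20 ≤ n) (hk : k ≤ 3) (s : Bool × ℕ) (hc : s.2 ≤ 16) :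
    (if itp n s < n - k then n - k - 1 - itp n s else itp n s) = itp n (stepA k s) := by
  obtain ⟨b, c⟩ := s
  simp only at hc
  cases b with
  | false =>
    have h1 : itp n (false, c) = c := rfl
    have h2 : itp n (true, c + k + 1) = n - (c + k + 1) := rfl
    rw [show stepA k (false, c) = (true, c + k + 1) from rfl, h1, h2, if_pos (by omega)]
    omega
  | true =>
    have h1 : itp n (true, c) = n - c := rfl
    rw [show stepA k (true, c) = if k < c then (false, c - 1 - k) else (true, c) from rfl, h1]
    by_cases hkc : k < c
    · rw [if_pos hkc, if_pos (by omega), show itp n (false, c - 1 - k) = c - 1 - k from rfl]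
      omega
    · rw [if_neg hkc, if_neg (by omega), h1]

lemma runA_spec (n : ℕ) (hn : 20 ≤ n) : ∀ (l : List ℕ), (∀ m ∈ l, m ≤ 3) →
    ∀ s : Bool × ℕ, okA l s = true →
    wapp (l.map (n - ·)) (itp n s) = itp n (runA l s) := by
  intro l
  induction l with
  | nil => intro _ s _; rfl
  | cons k l ih =>
    intro hl s hok
    have hok' : (okA l s && decide ((runA (k :: l) s).2 ≤ 16)) = true := hok
    simp only [Bool.and_eq_true, decide_eq_true_eq] at hok'
    have e : wapp ((k :: l).map (n - ·)) (itp n s) =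
        if wapp (l.map (n - ·)) (itp n s) < n - k then
          n - k - 1 - wapp (l.map (n - ·)) (itp n s)
        else wapp (l.map (n - ·)) (itp n s) := rfl
    rw [e, ih (fun m hm => hl m (List.mem_cons_of_mem _ hm)) s hok'.1,
      show runA (k :: l) s = stepA k (runA l s) from rfl]
    exact step_spec n k hn (hl k List.mem_cons_self) (runA l s) (okA_last l s hok'.1)

lemma itp_ne (n : ℕ) (hn : 20 ≤ n) (s t : Bool × ℕ) (hs : s.2 ≤ 3) (hs1 : s.1 = true → 1 ≤ s.2)
    (ht : t.2 ≤ 16) (hne : t ≠ s) : itp n t ≠ itp n s := by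
  obtain ⟨b, c⟩ := s; obtain ⟨b', c'⟩ := t
  cases b <;> cases b' <;>
    first
      | (simp_all [itp]; omega)
      | (simp_all [itp])
      | omega

lemma bigCase (n : ℕ) (hn : 20 ≤ n) (L : List ℕ) (hL : ∀ m ∈ L, m ≤ 3) (s : Bool × ℕ)
    (hs : s ∈ SL) (hok : okA L s = true) (hne : runA L s ≠ s) :
    ∃ a < n, wapp (L.map (n - ·)) a ≠ a := by
  have hsprop : s.2 ≤ 3 ∧ (s.1 = true → 1 ≤ s.2) ∧ itp n s < n := by
    simp only [SL, List.mem_cons, List.not_mem_nil, or_false] at hs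
    rcases hs with rfl | rfl | rfl | rfl <;>
      exact ⟨by omega, by simp, by simp [itp]; omega⟩
  refine ⟨itp n s, hsprop.2.2, ?_⟩
  rw [runA_spec n hn L hL s hok]
  exact itp_ne n hn s (runA L s) hsprop.1 hsprop.2.1 (okA_last L s hok) hne

lemma ofFn10 {α : Type*} (g : Fin 10 → α) :
    List.ofFn g = [g 0, g 1, g 2, g 3, g 4, g 5, g 6, g 7, g 8, g 9] := rfl

set_option maxRecDepth 100000 in
set_option synthInstance.maxSize 10000 in
set_option synthInstance.maxHeartbeats 1000000 in
set_option maxHeartbeats 2000000 in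
theorem coreBig : ∀ k0 : Fin 4, k0.val ≠ 2 → ∀ k1 : Fin 4, k1.val ≠ 2 → k0 ≠ k1 → ∀ k2 : Fin 4, k2.val ≠ 2 → k1 ≠ k2 → ∀ k3 : Fin 4, k3.val ≠ 2 → k2 ≠ k3 → ∀ k4 : Fin 4, k4.val ≠ 2 → k3 ≠ k4 → ∀ k5 : Fin 4, k5.val ≠ 2 → k4 ≠ k5 → ∀ k6 : Fin 4, k6.val ≠ 2 → k5 ≠ k6 → ∀ k7 : Fin 4, k7.val ≠ 2 → k6 ≠ k7 → ∀ k8 : Fin 4, k8.val ≠ 2 → k7 ≠ k8 → ∀ k9 : Fin 4, k9.val ≠ 2 → k8 ≠ k9 → k9 ≠ k0 →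
    goodBig [k0.val, k1.val, k2.val, k3.val, k4.val, k5.val, k6.val, k7.val, k8.val, k9.val] = true := by decide

set_option maxRecDepth 100000 in
set_option synthInstance.maxSize 10000 in
set_option synthInstance.maxHeartbeats 1000000 in
set_option maxHeartbeats 2000000 in
theorem coreSmall : ∀ d : Fin 7, ∀ k0 : Fin 4, k0.val ≠ 2 → ∀ k1 : Fin 4, k1.val ≠ 2 → k0 ≠ k1 → ∀ k2 : Fin 4, k2.val ≠ 2 → k1 ≠ k2 → ∀ k3 : Fin 4, k3.val ≠ 2 → k2 ≠ k3 → ∀ k4 : Fin 4, k4.val ≠ 2 → k3 ≠ k4 → ∀ k5 : Fin 4, k5.val ≠ 2 → k4 ≠ k5 → ∀ k6 : Fin 4, k6.val ≠ 2 → k5 ≠ k6 → ∀ k7 : Fin 4, k7.val ≠ 2 → k6 ≠ k7 → ∀ k8 : Fin 4, k8.val ≠ 2 → k7 ≠ k8 → ∀ k9 : Fin 4, k9.val ≠ 2 → k8 ≠ k9 → k9 ≠ k0 →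
    goodSmall (2 * d.val + 7) [k0.val, k1.val, k2.val, k3.val, k4.val, k5.val, k6.val, k7.val, k8.val, k9.val] = true := by decide

theorem pancake_no_tenCycles_BS5 (n : ℕ) (hodd : Odd n) (hn : 7 ≤ n)
    (f : Fin 10 → ℕ) (hmem : ∀ j, f j = n - 3 ∨ f j = n - 1 ∨ f j = n)
    (hadj : ∀ j, f j ≠ f (j + 1)) :
    (List.ofFn fun j => pancakeRev n (f j)).prod ≠ 1 := by
  have hofn : (List.ofFn fun j => pancakeRev n (f j)) = (List.ofFn f).map (pancakeRev n) := by
    rw [List.map_ofFn]; rfl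
  rw [hofn]
  have hklt : ∀ j : Fin 10, n - f j < 4 := by intro j; rcases hmem j with h | h | h <;> omega
  set K : Fin 10 → Fin 4 := fun j => ⟨n - f j, hklt j⟩ with hK
  have hfK : ∀ j, f j = n - (K j).val := by
    intro j; rcases hmem j with h | h | h <;> simp [hK] <;> omega
  have hK2 : ∀ j, (K j).val ≠ 2 := by
    intro j; rcases hmem j with h | h | h <;> simp [hK] <;> omega
  have hKadj : ∀ j : Fin 10, K j ≠ K (j + 1) := by
    intro j hj
    exact hadj j (by rw [hfK j, hfK (j + 1), hj])
  set L : List ℕ := [(K 0).val, (K 1).val, (K 2).val, (K 3).val, (K 4).val, (K 5).val,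
    (K 6).val, (K 7).val, (K 8).val, (K 9).val] with hL
  have hmap : List.ofFn f = L.map (n - ·) := by
    rw [ofFn10 f, hfK 0, hfK 1, hfK 2, hfK 3, hfK 4, hfK 5, hfK 6, hfK 7, hfK 8, hfK 9]
    rfl
  have hL3 : ∀ m ∈ L, m ≤ 3 := by
    intro m hm
    rw [hL] at hm
    simp only [List.mem_cons, List.not_mem_nil, or_false] at hm
    rcases hm with rfl | rfl | rfl | rfl | rfl | rfl | rfl | rfl | rfl | rfl <;>
      exact Nat.le_of_lt_succ (K _).isLt
  have hle : ∀ m ∈ L.map (n - ·), m ≤ n := by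
    intro m hm
    simp only [List.mem_map] at hm
    obtain ⟨kk, _, rfl⟩ := hm
    omega
  rw [hmap]
  rcases Nat.lt_or_ge n 20 with hlt | hge
  · obtain ⟨t, ht⟩ := hodd
    have hd : (n - 7) / 2 < 7 := by omega
    have hcs := coreSmall ⟨(n - 7) / 2, hd⟩ (K 0) (hK2 0) (K 1) (hK2 1) (hKadj 0) (K 2) (hK2 2) (hKadj 1) (K 3) (hK2 3) (hKadj 2) (K 4) (hK2 4) (hKadj 3) (K 5) (hK2 5) (hKadj 4) (K 6) (hK2 6) (hKadj 5) (K 7) (hK2 7) (hKadj 6) (K 8) (hK2 8) (hKadj 7) (K 9) (hK2 9) (hKadj 8) (hKadj 9)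
    have hn2 : 2 * ((⟨(n - 7) / 2, hd⟩ : Fin 7)).val + 7 = n := by
      simp only []; omega
    rw [hn2] at hcs
    have hex : ∃ a ∈ List.range n, wapp (L.map (n - ·)) a ≠ a := by
      simpa [goodSmall, List.any_eq_true, hL] using hcs
    obtain ⟨a, ha, hmove⟩ := hex
    exact key n (L.map (n - ·)) hle a (List.mem_range.mp ha) hmove
  · have hb := coreBig (K 0) (hK2 0) (K 1) (hK2 1) (hKadj 0) (K 2) (hK2 2) (hKadj 1) (K 3) (hK2 3) (hKadj 2) (K 4) (hK2 4) (hKadj 3) (K 5) (hK2 5) (hKadj 4) (K 6) (hK2 6) (hKadj 5) (K 7) (hK2 7) (hKadj 6) (K 8) (hK2 8) (hKadj 7) (K 9) (hK2 9) (hKadj 8) (hKadj 9)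
    have hex : ∃ s ∈ SL, (okA L s && !decide (runA L s = s)) = true := by
      simpa [goodBig, List.any_eq_true] using hb
    obtain ⟨s, hsmem, hs2⟩ := hex
    simp only [Bool.and_eq_true, Bool.not_eq_true', decide_eq_false_iff_not] at hs2
    obtain ⟨a, ha, hmove⟩ := bigCase n hge L hL3 s hsmem hs2.1 hs2.2
    exact key n (L.map (n - ·)) hle a ha hmove
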